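/- arXiv:2311.10649 — 2 statements merged into one kernel-verified Lean document; each statement's English description precedes it below -/
import Mathlib

section
/- Let A and B be finite types and let k ≥ 2 be an integer. Every element σ of PPT_k(A:B) satisfies tr σ ≤ 1 (i.e., all elements of PPT_k are sub-normalized states). -/
open Matrix
open scoped ComplexOrder

/-- Total positive semidefinite square root: the PSD square root of `M` if `M` is PSD,
and junk value `0` otherwise. -/
noncomputable def msqrt {n : Type*} [Fintype n] [DecidableEq n]
    (M : Matrix n n ℂ) : Matrix n n ℂ :=
  letI := Classical.dec M.PosSemidef
  if h : M.PosSemidef then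
    (h.1.eigenvectorUnitary : Matrix n n ℂ) * diagonal ((↑) ∘ (fun i => Real.sqrt (h.1.eigenvalues i)))
      * (star h.1.eigenvectorUnitary : Matrix n n ℂ) else 0

/-- The trace norm `‖M‖₁ = tr √(Mᴴ M)` of a complex matrix, as a real number. -/
noncomputable def traceNorm {n : Type*} [Fintype n] [DecidableEq n]
    (M : Matrix n n ℂ) : ℝ :=
  (msqrt (Mᴴ * M)).trace.re

/-- The partial transpose over the second party `B`:
`M^{T_B}((a,b),(a',b')) = M((a,b'),(a',b))`. -/
def ptB {A B : Type*} (M : Matrix (A × B) (A × B) ℂ) : Matrix (A × B) (A × B) ℂ :=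
  fun x y => M (x.1, y.2) (y.1, x.2)

/-- The set `PPT_k(A:B)`: positive semidefinite `ω₁` such that there exist `ω₂, …, ω_k` with
`−ω_{i+1} ⪯ ω_i^{T_B} ⪯ ω_{i+1}` for all `1 ≤ i ≤ k−1` and `‖ω_k^{T_B}‖₁ ≤ 1`. -/
def PPTset {A B : Type*} [Fintype A] [Fintype B] [DecidableEq A] [DecidableEq B]
    (k : ℕ) : Set (Matrix (A × B) (A × B) ℂ) :=
  {σ | σ.PosSemidef ∧ ∃ ω : ℕ → Matrix (A × B) (A × B) ℂ, ω 1 = σ ∧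
    (∀ i, 1 ≤ i → i ≤ k - 1 →
      (ω (i + 1) - ptB (ω i)).PosSemidef ∧ (ω (i + 1) + ptB (ω i)).PosSemidef) ∧
    traceNorm (ptB (ω k)) ≤ 1}


lemma trace_re_nonneg_of_psd {n : Type*} [Fintype n] [DecidableEq n]
    {M : Matrix n n ℂ} (h : M.PosSemidef) : 0 ≤ M.trace.re := by
  have : ∀ i, 0 ≤ (M i i).re := by
    intro i
    have := h.diag_nonneg (i := i)
    rw [Complex.le_def] at this
    simpa using this.1
  simpa [Matrix.trace, Matrix.diag, Complex.re_sum] using Finset.sum_nonneg fun i _ => this i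

lemma ptB_trace {A B : Type*} [Fintype A] [Fintype B]
    (M : Matrix (A × B) (A × B) ℂ) : (ptB M).trace = M.trace := by
  simp [Matrix.trace, Matrix.diag, ptB]

lemma ptB_isHermitian {A B : Type*} {M : Matrix (A × B) (A × B) ℂ}
    (h : M.IsHermitian) : (ptB M).IsHermitian := by
  ext ⟨a, b⟩ ⟨a', b'⟩
  have := congrFun (congrFun h (a, b')) (a', b)
  simpa [Matrix.conjTranspose_apply, ptB] using this

lemma trace_re_le_traceNorm {n : Type*} [Fintype n] [DecidableEq n]
    {M : Matrix n n ℂ} (h : M.IsHermitian) : M.trace.re ≤ traceNorm M := by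
  classical
  set U : Matrix n n ℂ := (h.eigenvectorUnitary : Matrix n n ℂ)
  set lam := h.eigenvalues
  have hU : U * star U = 1 := (Matrix.mem_unitaryGroup_iff).mp h.eigenvectorUnitary.2
  have hU' : star U * U = 1 := (Matrix.mem_unitaryGroup_iff').mp h.eigenvectorUnitary.2
  set D : Matrix n n ℂ := Matrix.diagonal (fun i => (lam i : ℂ))
  set D' : Matrix n n ℂ := Matrix.diagonal (fun i => ((|lam i| : ℝ) : ℂ))
  have hspec : M = U * D * star U := h.spectral_theorem
  set P : Matrix n n ℂ := U * D' * star U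
  have hD' : D'.PosSemidef := Matrix.posSemidef_diagonal_iff.mpr fun i => by
    simp [Complex.le_def, abs_nonneg]
  have hP : P.PosSemidef := by
    have := hD'.mul_mul_conjTranspose_same U
    simpa [P, Matrix.star_eq_conjTranspose] using this
  have hsq : P ^ 2 = Mᴴ * M := by
    have hDD : D' * D' = D * D := by
      have hfun : (fun i => ((|lam i| : ℝ) : ℂ) * ((|lam i| : ℝ) : ℂ))
          = fun i => ((lam i : ℂ) * (lam i : ℂ)) := by
        funext i
        rw [← Complex.ofReal_mul, ← Complex.ofReal_mul, abs_mul_abs_self]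
      simp only [D, D', Matrix.diagonal_mul_diagonal, hfun]
    calc P ^ 2 = U * (D' * (star U * U) * D') * star U := by
          simp only [P, pow_two, Matrix.mul_assoc]
      _ = U * (D * D) * star U := by rw [hU', Matrix.mul_one, hDD]
      _ = U * (D * (star U * U) * D) * star U := by rw [hU', Matrix.mul_one]
      _ = (U * D * star U) * (U * D * star U) := by simp only [Matrix.mul_assoc]
      _ = Mᴴ * M := by rw [← hspec, h.eq]
  have hMM : (Mᴴ * M).PosSemidef := Matrix.posSemidef_conjTranspose_mul_self M
  have hPsqrt : P = msqrt (Mᴴ * M) := by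
    open scoped MatrixOrder in
    rw [msqrt, dif_pos hMM]
    open scoped MatrixOrder in
    have e : ((hMM.1.eigenvectorUnitary : Matrix n n ℂ) * diagonal ((↑) ∘ (fun i => Real.sqrt (hMM.1.eigenvalues i)))
        * (star hMM.1.eigenvectorUnitary : Matrix n n ℂ)) = CFC.sqrt (Mᴴ * M) := by
      rw [CFC.sqrt_eq_real_sqrt (Mᴴ * M) hMM.nonneg, cfcₙ_eq_cfc (hf := Real.continuous_sqrt.continuousOn) (hf0 := Real.sqrt_zero), hMM.1.cfc_eq]; rfl
    open scoped MatrixOrder in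
    rw [e, eq_comm, CFC.sqrt_eq_iff _ _ hMM.nonneg hP.nonneg, ← pow_two, hsq]
  have htn : traceNorm M = P.trace.re := by
    rw [traceNorm, ← hPsqrt]
  have htrP : P.trace = ∑ i, ((|lam i| : ℝ) : ℂ) := by
    rw [show P.trace = (U * D' * star U).trace from rfl, Matrix.trace_mul_comm,
      ← Matrix.mul_assoc, hU', Matrix.one_mul]
    simp [D', Matrix.trace_diagonal]
  have htrM : M.trace = ∑ i, (lam i : ℂ) := by
    rw [hspec, Matrix.trace_mul_comm, ← Matrix.mul_assoc, hU', Matrix.one_mul]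
    simp [D, Matrix.trace_diagonal]
  rw [htn, htrP, htrM]
  simp only [Complex.re_sum, Complex.ofReal_re]
  exact Finset.sum_le_sum fun i _ => le_abs_self _

theorem trace_le_one_of_mem_PPTset {A B : Type*}
    [Fintype A] [Fintype B] [DecidableEq A] [DecidableEq B]
    (k : ℕ) (hk : 2 ≤ k) (σ : Matrix (A × B) (A × B) ℂ)
    (hσ : σ ∈ PPTset (A := A) (B := B) k) :
    σ.trace.re ≤ 1 := by
  obtain ⟨hpsd, ω, hω1, hchain, hnorm⟩ := hσ
  -- chain of trace inequalities
  have key : ∀ i, i ≤ k - 1 → σ.trace.re ≤ (ω (i + 1)).trace.re := by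
    intro i
    induction i with
    | zero => intro _; rw [hω1]
    | succ j ih =>
      intro hj
      have hj' : j ≤ k - 1 := Nat.le_of_succ_le hj
      have h1 : 1 ≤ j + 1 := Nat.succ_le_succ (Nat.zero_le _)
      obtain ⟨hpos, _⟩ := hchain (j + 1) h1 hj
      have h0 : 0 ≤ (ω (j + 1 + 1) - ptB (ω (j + 1))).trace.re :=
        trace_re_nonneg_of_psd hpos
      rw [Matrix.trace_sub, Complex.sub_re, ptB_trace] at h0
      exact (ih hj').trans (by linarith)
  have hk1 : k - 1 + 1 = k := by omega
  have hk' : σ.trace.re ≤ (ω k).trace.re := by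
    have := key (k - 1) le_rfl
    rwa [hk1] at this
  -- ω k is Hermitian
  have hherm : (ω k).IsHermitian := by
    have h1 : 1 ≤ k - 1 := by omega
    obtain ⟨hm, hp⟩ := hchain (k - 1) h1 le_rfl
    rw [hk1] at hm hp
    have hsum : ((ω k - ptB (ω (k - 1))) + (ω k + ptB (ω (k - 1)))).IsHermitian :=
      (hm.add hp).1
    have h2 : (ω k - ptB (ω (k - 1))) + (ω k + ptB (ω (k - 1))) = (2 : ℂ) • ω k := by
      ext x y; simp [Matrix.add_apply, Matrix.sub_apply, Matrix.smul_apply]; ring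
    rw [h2] at hsum
    have := hsum
    rw [Matrix.IsHermitian, Matrix.conjTranspose_smul] at this
    have h2ne : (star (2 : ℂ)) = 2 := by norm_num
    rw [h2ne] at this
    have := smul_right_injective (Matrix (A × B) (A × B) ℂ) (two_ne_zero (α := ℂ)) this
    exact this
  -- conclude
  have hle : (ω k).trace.re ≤ traceNorm (ptB (ω k)) := by
    have := trace_re_le_traceNorm (ptB_isHermitian hherm)
    rwa [ptB_trace] at this
  linarith
end

section
/- Let A, B, C, D be square complex matrices (A of one size, C possibly of another) with A and C Hermitian. If −B ⪯ A ⪯ B and −D ⪯ C ⪯ D, then −(B ⊗ D) ⪯ A ⊗ C ⪯ B ⊗ D, where ⊗ denotes the Kronecker product and X ⪯ Y means Y − X is positive semidefinite. -/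
open Matrix
open scoped ComplexOrder Kronecker

lemma psd_add' {k : Type*} [Fintype k] {M N : Matrix k k ℂ}
    (hM : M.PosSemidef) (hN : N.PosSemidef) : (M + N).PosSemidef := by
  refine ⟨hM.1.add hN.1, fun x => ?_⟩
  simpa [mul_add, add_mul] using add_nonneg (hM.2 x) (hN.2 x)

lemma psd_half {k : Type*} [Fintype k] {M : Matrix k k ℂ}
    (hM : M.PosSemidef) : ((1/2 : ℂ) • M).PosSemidef := by
  refine ⟨?_, fun x => ?_⟩
  · unfold Matrix.IsHermitian
    rw [conjTranspose_smul, hM.1.eq]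
    norm_num
  · exact (hM.smul (by rw [Complex.le_def]; norm_num : (0:ℂ) ≤ 1/2)).2 x

lemma psd_kron {m n : Type*} [Fintype m] [Fintype n] {M : Matrix m m ℂ}
    {N : Matrix n n ℂ} (hM : M.PosSemidef) (hN : N.PosSemidef) :
    (M ⊗ₖ N).PosSemidef := by
  classical
  obtain ⟨X, rfl⟩ : ∃ X : Matrix m m ℂ, M = Xᴴ * X := by
    open scoped MatrixOrder Matrix.Norms.L2Operator in
    simpa [star_eq_conjTranspose] using CStarAlgebra.nonneg_iff_eq_star_mul_self.mp hM.nonneg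
  obtain ⟨Y, rfl⟩ : ∃ Y : Matrix n n ℂ, N = Yᴴ * Y := by
    open scoped MatrixOrder Matrix.Norms.L2Operator in
    simpa [star_eq_conjTranspose] using CStarAlgebra.nonneg_iff_eq_star_mul_self.mp hN.nonneg
  rw [Matrix.mul_kronecker_mul]
  have h : Xᴴ ⊗ₖ Yᴴ = (X ⊗ₖ Y)ᴴ := by
    ext ⟨i, j⟩ ⟨k, l⟩
    simp [Matrix.conjTranspose_apply, mul_comm]
  rw [h]
  exact Matrix.posSemidef_conjTranspose_mul_self _

theorem kronecker_loewner_sandwich {m n : Type*} [Fintype m] [Fintype n]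
    (A B : Matrix m m ℂ) (C D : Matrix n n ℂ)
    (hA : A.IsHermitian) (hC : C.IsHermitian)
    (hBA₁ : (B - A).PosSemidef) (hBA₂ : (B + A).PosSemidef)
    (hDC₁ : (D - C).PosSemidef) (hDC₂ : (D + C).PosSemidef) :
    (B ⊗ₖ D - A ⊗ₖ C).PosSemidef ∧ (B ⊗ₖ D + A ⊗ₖ C).PosSemidef := by
  constructor
  · have key : B ⊗ₖ D - A ⊗ₖ C
        = (1/2 : ℂ) • ((B - A) ⊗ₖ (D + C) + (B + A) ⊗ₖ (D - C)) := by
      ext ⟨i, j⟩ ⟨k, l⟩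
      simp [Matrix.kroneckerMap_apply, Matrix.sub_apply, Matrix.add_apply,
        Matrix.smul_apply, smul_eq_mul]
      ring
    rw [key]
    exact psd_half (psd_add' (psd_kron hBA₁ hDC₂) (psd_kron hBA₂ hDC₁))
  · have key : B ⊗ₖ D + A ⊗ₖ C
        = (1/2 : ℂ) • ((B - A) ⊗ₖ (D - C) + (B + A) ⊗ₖ (D + C)) := by
      ext ⟨i, j⟩ ⟨k, l⟩
      simp [Matrix.kroneckerMap_apply, Matrix.sub_apply, Matrix.add_apply,
        Matrix.smul_apply, smul_eq_mul]
      ring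
    rw [key]
    exact psd_half (psd_add' (psd_kron hBA₁ hDC₁) (psd_kron hBA₂ hDC₂))
end
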